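/- arXiv:2309.16411 — 6 statements merged into one kernel-verified Lean document; each statement's English description precedes it below -/
import Mathlib

section
/- Let G be a finite graph on n vertices. If there is no vertex subset U with |U| ≥ 2n/3 such that the induced subgraph G[U] is an ε-expander (i.e., every subset W of U with |W| ≤ |U|/2 has at least ε|W| edges of G[U] leaving W), then G has an edge separator of size at most (2/3)εn, i.e., a set S of at most (2/3)εn edges whose removal partitions the vertices into two parts each of size at most 2n/3 with no edges between them. -/
open Finset

variable {V : Type*} [Fintype V] [DecidableEq V]

/-- Number of edges of `G` with one endpoint in `A` and the other in `W` (for disjoint `A`, `W`),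
counted as ordered pairs, hence exactly once per edge. -/
def bdryTo (G : SimpleGraph V) [DecidableRel G.Adj] (A W : Finset V) : ℕ :=
  ((A ×ˢ W).filter fun p => G.Adj p.1 p.2).card

/-- Number of boundary edges of `A` inside the induced subgraph `G[B]`:
edges of `G` with one endpoint in `A` and the other in `B \ A`. -/
def bdryIn (G : SimpleGraph V) [DecidableRel G.Adj] (B A : Finset V) : ℕ :=
  bdryTo G A (B \ A)

/-- The induced subgraph `G[U]` is an `ε`-expander: every `W ⊆ U` with `|W| ≤ |U|/2`
has at least `ε|W|` boundary edges inside `G[U]`. -/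
def IsExpanderOn (G : SimpleGraph V) [DecidableRel G.Adj] (U : Finset V) (ε : ℝ) : Prop :=
  ∀ W ⊆ U, 2 * W.card ≤ U.card → ε * W.card ≤ (bdryIn G U W : ℝ)

lemma bdryTo_mono_right (G : SimpleGraph V) [DecidableRel G.Adj] {A X Y : Finset V}
    (h : X ⊆ Y) : bdryTo G A X ≤ bdryTo G A Y :=
  Finset.card_le_card (Finset.filter_subset_filter _
    (Finset.product_subset_product_right h))

lemma bdryTo_union_left (G : SimpleGraph V) [DecidableRel G.Adj] {A W X : Finset V}
    (h : Disjoint A W) : bdryTo G (A ∪ W) X = bdryTo G A X + bdryTo G W X := by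
  unfold bdryTo
  rw [Finset.union_product, Finset.filter_union, Finset.card_union_of_disjoint]
  refine Finset.disjoint_filter_filter ?_
  rw [Finset.disjoint_left]
  intro p hp hq
  simp only [Finset.mem_product] at hp hq
  exact (Finset.disjoint_left.mp h hp.1) hq.1

lemma auxPeel (G : SimpleGraph V) [DecidableRel G.Adj] (ε : ℝ)
    (h : ∀ U : Finset V, 2 * Fintype.card V ≤ 3 * U.card → ¬ IsExpanderOn G U ε) :
    ∀ k (A : Finset V), Aᶜ.card ≤ k → 3 * A.card ≤ 2 * Fintype.card V →
      (bdryTo G A Aᶜ : ℝ) ≤ ε * A.card →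
      ∃ V₁ : Finset V, 3 * V₁.card ≤ 2 * Fintype.card V ∧
        3 * V₁ᶜ.card ≤ 2 * Fintype.card V ∧ (bdryTo G V₁ V₁ᶜ : ℝ) ≤ ε * V₁.card := by
  intro k
  induction k with
  | zero =>
    intro A hk hA hcut
    exact ⟨A, hA, by omega, hcut⟩
  | succ k ih =>
    intro A hk hA hcut
    by_cases hstop : 3 * Aᶜ.card ≤ 2 * Fintype.card V
    · exact ⟨A, hA, hstop, hcut⟩
    · have hBn : 2 * Fintype.card V ≤ 3 * Aᶜ.card := le_of_not_ge hstop
      have hne := h Aᶜ hBn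
      rw [IsExpanderOn] at hne
      push_neg at hne
      obtain ⟨W, hWsub, hWsize, hWbad⟩ := hne
      have hWne : W.Nonempty := by
        rcases W.eq_empty_or_nonempty with rfl | hne'
        · simp [bdryIn, bdryTo] at hWbad
        · exact hne'
      have hdisj : Disjoint A W :=
        Finset.disjoint_left.mpr fun a ha haW =>
          (Finset.mem_compl.mp (hWsub haW)) ha
      have hcompl : (A ∪ W)ᶜ = Aᶜ \ W := by
        rw [Finset.compl_union]; ext a; simp [Finset.mem_sdiff, Finset.mem_compl]
      have hcardU : (A ∪ W).card = A.card + W.card :=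
        Finset.card_union_of_disjoint hdisj
      have hcardC : Aᶜ.card = Fintype.card V - A.card := by
        rw [Finset.card_compl]
      have hAle : A.card ≤ Fintype.card V := Finset.card_le_univ A
      have hWcard : 1 ≤ W.card := hWne.card_pos
      have hWleC : W.card ≤ Aᶜ.card := Finset.card_le_card hWsub
      have hcardC' : ((A ∪ W)ᶜ).card = Aᶜ.card - W.card := by
        rw [hcompl, Finset.card_sdiff_of_subset hWsub]
      -- size bounds
      have hA' : 3 * (A ∪ W).card ≤ 2 * Fintype.card V := by omega
      -- cut bound
      have hcut' : (bdryTo G (A ∪ W) (A ∪ W)ᶜ : ℝ) ≤ ε * (A ∪ W).card := by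
        have e1 : bdryTo G (A ∪ W) (A ∪ W)ᶜ
            = bdryTo G A (Aᶜ \ W) + bdryTo G W (Aᶜ \ W) := by
          rw [hcompl, bdryTo_union_left G hdisj]
        have e2 : bdryTo G A (Aᶜ \ W) ≤ bdryTo G A Aᶜ :=
          bdryTo_mono_right G (Finset.sdiff_subset)
        have e3 : (bdryTo G W (Aᶜ \ W) : ℝ) < ε * W.card := hWbad
        have e4 : (bdryTo G A (Aᶜ \ W) : ℝ) ≤ ε * A.card :=
          le_trans (by exact_mod_cast e2) hcut
        rw [e1, hcardU]
        push_cast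
        linarith
      exact ih (A ∪ W) (by omega) hA' hcut'

/-- If no `U` with `|U| ≥ 2n/3` induces an `ε`-expander, then `G` has an edge separator
(a balanced vertex bipartition with few crossing edges) of size at most `(2/3)εn`. -/
theorem stmt0 (G : SimpleGraph V) [DecidableRel G.Adj] (ε : ℝ)
    (h : ¬ ∃ U : Finset V, 2 * Fintype.card V ≤ 3 * U.card ∧ IsExpanderOn G U ε) :
    ∃ V₁ : Finset V, 3 * V₁.card ≤ 2 * Fintype.card V ∧ 3 * V₁ᶜ.card ≤ 2 * Fintype.card V ∧
      (bdryTo G V₁ V₁ᶜ : ℝ) ≤ 2 / 3 * ε * Fintype.card V := by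
  push_neg at h
  have hε : 0 < ε := by
    by_contra hle
    push_neg at hle
    refine h Finset.univ (by simp; omega) fun W _ _ => ?_
    have : ε * W.card ≤ 0 :=
      mul_nonpos_of_nonpos_of_nonneg hle (Nat.cast_nonneg _)
    exact this.trans (Nat.cast_nonneg _)
  have h0 : (bdryTo G (∅ : Finset V) (∅ : Finset V)ᶜ : ℝ) ≤ ε * (∅ : Finset V).card := by
    simp [bdryTo]
  obtain ⟨V₁, h1, h2, h3⟩ :=
    auxPeel G ε h ((∅ : Finset V)ᶜ.card) ∅ le_rfl (by simp) h0
  refine ⟨V₁, h1, h2, h3.trans ?_⟩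
  have hc : (V₁.card : ℝ) * 3 ≤ 2 * Fintype.card V := by exact_mod_cast by omega
  nlinarith [hε.le]
end

section
/- There is a universal constant c such that the following holds. Let G = (V,E) be a graph on n vertices such that no subset U ⊆ V with |U| ≥ m induces an ε-expander subgraph G[U]. Then V can be partitioned into sets A_1, ..., A_t with |A_i| < 3m for all i, and the number of edges of G with endpoints in different parts A_i is at most c·log(n)·εn. -/
open Finset

variable {V : Type*} [Fintype V] [DecidableEq V]

set_option maxRecDepth 8000 in
private lemma key (G : SimpleGraph V) [DecidableRel G.Adj] (m : ℕ) (ε : ℝ) (hε : 0 ≤ ε)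
    (hno : ∀ U : Finset V, m ≤ U.card → ¬ IsExpanderOn G U ε) (U : Finset V) :
    ∃ (t : ℕ) (part : V → Fin t),
      (∀ j : Fin t, (U.filter fun v => part v = j).card < m) ∧
      ((((U ×ˢ U).filter fun p : V × V => G.Adj p.1 p.2 ∧ part p.1 < part p.2).card : ℝ)
        ≤ ε * U.card * Real.logb 2 U.card) := by
  induction U using Finset.strongInduction with
  | _ U ih =>
  by_cases hcard : U.card < m
  · refine ⟨1, fun _ => 0, ?_, ?_⟩
    · intro j
      exact lt_of_le_of_lt (Finset.card_filter_le _ _) hcard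
    · have h0 : ((U ×ˢ U).filter fun p : V × V =>
          G.Adj p.1 p.2 ∧ (fun _ : V => (0 : Fin 1)) p.1 < (fun _ : V => (0 : Fin 1)) p.2) = ∅ := by
        apply Finset.filter_false_of_mem
        intro p _ h
        exact absurd h.2 (lt_irrefl _)
      rw [h0]
      simp only [Finset.card_empty, Nat.cast_zero]
      rcases Nat.eq_zero_or_pos U.card with h | h
      · simp [h]
      · have h1 : (1 : ℝ) ≤ (U.card : ℝ) := by exact_mod_cast h
        have := Real.logb_nonneg (by norm_num : (1:ℝ) < 2) h1
        positivity
  · push_neg at hcard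
    have hne := hno U hcard
    unfold IsExpanderOn at hne
    push_neg at hne
    obtain ⟨W, hWU, hW2, hWb⟩ := hne
    have hWpos : 0 < W.card := by
      rcases Nat.eq_zero_or_pos W.card with h | h
      · exfalso
        rw [h] at hWb
        simp at hWb
        exact absurd hWb (not_lt.mpr (Nat.cast_nonneg _))
      · exact h
    have hWne : W.Nonempty := Finset.card_pos.mp hWpos
    have hUpos : 0 < U.card := lt_of_lt_of_le (by omega) hW2
    set D := U \ W with hD
    have hWss : W ⊂ U := hWU.ssubset_of_ne (by
      intro h
      rw [h] at hW2
      omega)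
    have hDss : D ⊂ U := Finset.sdiff_ssubset hWU hWne
    obtain ⟨t1, f1, hf1, hc1⟩ := ih W hWss
    obtain ⟨t2, f2, hf2, hc2⟩ := ih D hDss
    refine ⟨t1 + t2, fun v => if v ∈ W then (f1 v).castAdd t2 else (f2 v).natAdd t1, ?_, ?_⟩
    · intro j
      by_cases hj : j.val < t1
      · have heq : (U.filter fun v =>
            (if v ∈ W then (f1 v).castAdd t2 else (f2 v).natAdd t1) = j)
            = W.filter (fun v => f1 v = ⟨j.val, hj⟩) := by
          ext v
          simp only [Finset.mem_filter]
          constructor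
          · rintro ⟨hvU, hv⟩
            by_cases hvW : v ∈ W
            · rw [if_pos hvW] at hv
              refine ⟨hvW, Fin.ext ?_⟩
              have := congrArg Fin.val hv
              simpa using this
            · rw [if_neg hvW] at hv
              exfalso
              have := congrArg Fin.val hv
              simp [Fin.natAdd] at this
              omega
          · rintro ⟨hvW, hv⟩
            refine ⟨hWU hvW, ?_⟩
            rw [if_pos hvW, hv]
            exact Fin.ext (by simp)
        rw [heq]
        exact hf1 _
      · push_neg at hj
        have hj2 : j.val - t1 < t2 := by omega
        have heq : (U.filter fun v =>
            (if v ∈ W then (f1 v).castAdd t2 else (f2 v).natAdd t1) = j)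
            = D.filter (fun v => f2 v = ⟨j.val - t1, hj2⟩) := by
          ext v
          simp only [Finset.mem_filter]
          constructor
          · rintro ⟨hvU, hv⟩
            by_cases hvW : v ∈ W
            · rw [if_pos hvW] at hv
              exfalso
              have := congrArg Fin.val hv
              have hlt := (f1 v).isLt
              simp [Fin.castAdd] at this
              omega
            · rw [if_neg hvW] at hv
              refine ⟨Finset.mem_sdiff.mpr ⟨hvU, hvW⟩, Fin.ext ?_⟩
              have := congrArg Fin.val hv
              simp [Fin.natAdd] at this
              simp
              omega
          · rintro ⟨hvD, hv⟩
            have hvW : v ∉ W := (Finset.mem_sdiff.mp hvD).2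
            refine ⟨(Finset.mem_sdiff.mp hvD).1, ?_⟩
            rw [if_neg hvW, hv]
            refine Fin.ext ?_
            simp [Fin.natAdd]
            omega
        rw [heq]
        exact hf2 _
    · -- crossing edges bound
      set part : V → Fin (t1 + t2) :=
        fun v => if v ∈ W then (f1 v).castAdd t2 else (f2 v).natAdd t1 with hpart
      have hWD : Disjoint W D := Finset.disjoint_sdiff
      have hsplit : (U ×ˢ U) = ((W ×ˢ W) ∪ (W ×ˢ D)) ∪ ((D ×ˢ W) ∪ (D ×ˢ D)) := by
        conv_lhs => rw [← Finset.union_sdiff_of_subset hWU]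
        rw [Finset.union_product, Finset.product_union, Finset.product_union]
      have dmem : ∀ {s t s' t' : Finset V}, Disjoint s s' ∨ Disjoint t t' →
          Disjoint (s ×ˢ t) (s' ×ˢ t') := by
        intro s t s' t' h
        rw [Finset.disjoint_left]
        intro p hp hq
        rw [Finset.mem_product] at hp hq
        rcases h with h | h
        · exact Finset.disjoint_left.mp h hp.1 hq.1
        · exact Finset.disjoint_left.mp h hp.2 hq.2
      set Q : V × V → Prop := fun p => G.Adj p.1 p.2 ∧ part p.1 < part p.2 with hQ
      have d1 : Disjoint ((W ×ˢ W).filter Q ∪ (W ×ˢ D).filter Q)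
          ((D ×ˢ W).filter Q ∪ (D ×ˢ D).filter Q) := by
        apply Finset.disjoint_union_left.mpr
        constructor <;> apply Finset.disjoint_union_right.mpr <;>
          exact ⟨Finset.disjoint_filter_filter (dmem (Or.inl hWD)),
            Finset.disjoint_filter_filter (dmem (Or.inl hWD))⟩
      have d2 : Disjoint ((W ×ˢ W).filter Q) ((W ×ˢ D).filter Q) :=
        Finset.disjoint_filter_filter (dmem (Or.inr hWD))
      have d3 : Disjoint ((D ×ˢ W).filter Q) ((D ×ˢ D).filter Q) :=
        Finset.disjoint_filter_filter (dmem (Or.inr hWD))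
      have hcardsplit : ((U ×ˢ U).filter Q).card
          = ((W ×ˢ W).filter Q).card + ((W ×ˢ D).filter Q).card
            + (((D ×ˢ W).filter Q).card + ((D ×ˢ D).filter Q).card) := by
        rw [hsplit, Finset.filter_union, Finset.filter_union, Finset.filter_union,
          Finset.card_union_of_disjoint d1, Finset.card_union_of_disjoint d2,
          Finset.card_union_of_disjoint d3]
      have eA : ((W ×ˢ W).filter Q)
          = (W ×ˢ W).filter (fun p => G.Adj p.1 p.2 ∧ f1 p.1 < f1 p.2) := by
        apply Finset.filter_congr
        intro p hp
        rw [Finset.mem_product] at hp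
        simp only [hQ, hpart, if_pos hp.1, if_pos hp.2]
        simp only [Fin.lt_def, Fin.coe_castAdd]
      have eB : ((W ×ˢ D).filter Q) = (W ×ˢ D).filter (fun p => G.Adj p.1 p.2) := by
        apply Finset.filter_congr
        intro p hp
        rw [Finset.mem_product] at hp
        have hp2 : p.2 ∉ W := (Finset.mem_sdiff.mp hp.2).2
        simp only [hQ, hpart, if_pos hp.1, if_neg hp2]
        have : (f1 p.1).castAdd t2 < (f2 p.2).natAdd t1 := by
          simp [Fin.lt_def]
          have := (f1 p.1).isLt
          omega
        simp [this]
      have eC : ((D ×ˢ W).filter Q) = ∅ := by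
        apply Finset.filter_false_of_mem
        intro p hp
        rw [Finset.mem_product] at hp
        have hp1 : p.1 ∉ W := (Finset.mem_sdiff.mp hp.1).2
        simp only [hQ, hpart, if_neg hp1, if_pos hp.2]
        rintro ⟨-, h⟩
        rw [Fin.lt_def] at h
        have := (f1 p.2).isLt
        simp [Fin.natAdd, Fin.castAdd] at h
        omega
      have eD : ((D ×ˢ D).filter Q)
          = (D ×ˢ D).filter (fun p => G.Adj p.1 p.2 ∧ f2 p.1 < f2 p.2) := by
        apply Finset.filter_congr
        intro p hp
        rw [Finset.mem_product] at hp
        have hp1 : p.1 ∉ W := (Finset.mem_sdiff.mp hp.1).2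
        have hp2 : p.2 ∉ W := (Finset.mem_sdiff.mp hp.2).2
        simp only [hQ, hpart, if_neg hp1, if_neg hp2]
        simp only [Fin.lt_def, Fin.coe_natAdd]
        constructor <;> rintro ⟨ha, hb⟩ <;> exact ⟨ha, by omega⟩
      have hBbd : ((W ×ˢ D).filter (fun p => G.Adj p.1 p.2)).card = bdryIn G U W := rfl
      rw [hcardsplit, eA, eB, eC, eD, hBbd]
      simp only [Finset.card_empty, Nat.cast_add, Nat.cast_zero]
      -- real arithmetic
      have hsum : (W.card : ℝ) + D.card = U.card := by
        have h1 : D.card = U.card - W.card := Finset.card_sdiff_of_subset hWU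
        have h2 : W.card ≤ U.card := Finset.card_le_card hWU
        push_cast [h1]
        rw [Nat.cast_sub h2]
        ring
      have hWc1 : (1 : ℝ) ≤ (W.card : ℝ) := by exact_mod_cast hWpos
      have hUc1 : (1 : ℝ) ≤ (U.card : ℝ) := by exact_mod_cast hUpos
      have hlogW : Real.logb 2 W.card + 1 ≤ Real.logb 2 U.card := by
        have h2w : (2 : ℝ) * W.card ≤ U.card := by exact_mod_cast hW2
        have : Real.logb 2 ((2 : ℝ) * W.card) ≤ Real.logb 2 U.card := by
          apply (Real.logb_le_logb (by norm_num) (by linarith) (by linarith)).mpr h2w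
        rw [Real.logb_mul (by norm_num) (by linarith)] at this
        have h22 : Real.logb 2 2 = 1 := by
          simp [Real.logb, Real.log_ne_zero_of_pos_of_ne_one]
          norm_num
        rw [h22] at this
        linarith
      have hlogWnn : 0 ≤ Real.logb 2 W.card := Real.logb_nonneg (by norm_num) hWc1
      have hlogUnn : 0 ≤ Real.logb 2 U.card := Real.logb_nonneg (by norm_num) hUc1
      have hlogD : Real.logb 2 D.card ≤ Real.logb 2 U.card := by
        rcases Nat.eq_zero_or_pos D.card with h | h
        · rw [h]
          simpa using hlogUnn
        · have hd1 : (1 : ℝ) ≤ (D.card : ℝ) := by exact_mod_cast h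
          have hdu : (D.card : ℝ) ≤ U.card := by
            exact_mod_cast Finset.card_le_card hDss.subset
          exact (Real.logb_le_logb (by norm_num) (by linarith) (by linarith)).mpr hdu
      have hWnn : (0 : ℝ) ≤ W.card := Nat.cast_nonneg _
      have hDnn : (0 : ℝ) ≤ D.card := Nat.cast_nonneg _
      have t1' : (((W ×ˢ W).filter (fun p => G.Adj p.1 p.2 ∧ f1 p.1 < f1 p.2)).card : ℝ)
          ≤ ε * W.card * Real.logb 2 W.card := hc1
      have t2' : (((D ×ˢ D).filter (fun p => G.Adj p.1 p.2 ∧ f2 p.1 < f2 p.2)).card : ℝ)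
          ≤ ε * D.card * Real.logb 2 D.card := hc2
      have hb : (bdryIn G U W : ℝ) ≤ ε * W.card := le_of_lt hWb
      have k1 : ε * W.card * Real.logb 2 W.card + ε * W.card
          ≤ ε * W.card * Real.logb 2 U.card := by
        have := mul_le_mul_of_nonneg_left hlogW (mul_nonneg hε hWnn)
        nlinarith
      have k2 : ε * D.card * Real.logb 2 D.card ≤ ε * D.card * Real.logb 2 U.card :=
        mul_le_mul_of_nonneg_left hlogD (mul_nonneg hε hDnn)
      have : ε * W.card * Real.logb 2 U.card + ε * D.card * Real.logb 2 U.card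
          = ε * U.card * Real.logb 2 U.card := by
        rw [← hsum]; ring
      linarith

/-- There is a universal constant `c` such that any graph with no induced `ε`-expander on `m` or
more vertices can be partitioned into parts of size `< 3m` with at most `c·log(n)·εn` crossing
edges (each crossing edge counted once via the ordering of the parts). -/
theorem stmt4 : ∃ c : ℝ, 0 < c ∧
    ∀ (V : Type) (_ : Fintype V) (_ : DecidableEq V)
      (G : SimpleGraph V) (_ : DecidableRel G.Adj) (m : ℕ) (ε : ℝ), 0 ≤ ε →
      (¬ ∃ U : Finset V, m ≤ U.card ∧ IsExpanderOn G U ε) →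
      ∃ (t : ℕ) (part : V → Fin t),
        (∀ j : Fin t, (Finset.univ.filter fun v => part v = j).card < 3 * m) ∧
        ((((Finset.univ ×ˢ Finset.univ).filter
            fun p : V × V => G.Adj p.1 p.2 ∧ part p.1 < part p.2).card : ℝ)
          ≤ c * Real.log (Fintype.card V) * ε * Fintype.card V) := by
  refine ⟨1 / Real.log 2, by positivity, ?_⟩
  intro V _ _ G _ m ε hε hno
  push_neg at hno
  have hm : 1 ≤ m := by
    by_contra h
    push_neg at h
    interval_cases m
    apply hno ∅ (by simp)
    intro W hW _
    rw [Finset.subset_empty] at hW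
    subst hW
    simp
  obtain ⟨t, part, hfib, hcross⟩ := key G m ε hε hno Finset.univ
  refine ⟨t, part, fun j => lt_of_lt_of_le (hfib j) (by omega), ?_⟩
  refine le_trans hcross ?_
  have hlog2 : Real.log 2 ≠ 0 := ne_of_gt (Real.log_pos (by norm_num))
  rw [Real.logb, Finset.card_univ]
  apply le_of_eq
  field_simp
end

section
/- Let G be the connectivity graph of a classical linear code C with parameters [n,k,d]. Suppose the vertex set of G is partitioned as A ⊔ B_1 ⊔ ... ⊔ B_s such that no edge of G joins two distinct sets B_i and B_j. Then either d ≤ max_i |B_i| or k ≤ |A|. -/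
open Finset

variable {V : Type*} [Fintype V] [DecidableEq V]

/-- Connectivity graph of a classical code with check matrix `H`: bits are vertices, two bits are
adjacent iff some check contains both in its support. -/
def connGraph {r n : ℕ} (H : Matrix (Fin r) (Fin n) (ZMod 2)) : SimpleGraph (Fin n) where
  Adj u v := u ≠ v ∧ ∃ i, H i u ≠ 0 ∧ H i v ≠ 0
  symm := ⟨fun _ _ ⟨h1, i, ha, hb⟩ => ⟨h1.symm, i, hb, ha⟩⟩
  loopless := ⟨fun _ h => h.1 rfl⟩

instance {r n : ℕ} (H : Matrix (Fin r) (Fin n) (ZMod 2)) : DecidableRel (connGraph H).Adj :=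
  fun _ _ => instDecidableAnd

/-- Partition lemma for classical codes: if the bits of an `[n,k,d]` code are partitioned into
`A ⊔ B_1 ⊔ ... ⊔ B_s` with no edge of the connectivity graph joining two distinct `B_i`'s, then
`d ≤ max_i |B_i|` or `k ≤ |A|`. -/
theorem stmt6 (n r k d s : ℕ) (H : Matrix (Fin r) (Fin n) (ZMod 2))
    (hk : Module.finrank (ZMod 2) (LinearMap.ker H.mulVecLin) = k)
    (hd : ∀ x : Fin n → ZMod 2, H.mulVec x = 0 → x ≠ 0 → d ≤ hammingNorm x)
    (A : Finset (Fin n)) (B : Fin s → Finset (Fin n))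
    (hdisjB : ∀ i j, i ≠ j → Disjoint (B i) (B j))
    (hdisjA : ∀ i, Disjoint A (B i))
    (hcover : A ∪ Finset.univ.biUnion B = Finset.univ)
    (hnoedge : ∀ i j, i ≠ j → ∀ u ∈ B i, ∀ v ∈ B j, ¬ (connGraph H).Adj u v) :
    d ≤ Finset.univ.sup (fun i => (B i).card) ∨ k ≤ A.card := by
  by_cases hkA : k ≤ A.card
  · exact Or.inr hkA
  left
  -- restriction map to A is not injective
  set K := LinearMap.ker H.mulVecLin
  let φ : K →ₗ[ZMod 2] (A → ZMod 2) :=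
    (LinearMap.funLeft (ZMod 2) (ZMod 2) (fun a : A => (a : Fin n))).comp K.subtype
  have hninj : ¬ Function.Injective φ := by
    intro hinj
    have := LinearMap.finrank_le_finrank_of_injective hinj
    rw [hk, Module.finrank_pi (ZMod 2)] at this
    simp [Fintype.card_coe] at this
    exact hkA this
  rw [Function.not_injective_iff] at hninj
  obtain ⟨a, b, hab, hne⟩ := hninj
  set z : K := a - b with hz
  have hzne : z ≠ 0 := sub_ne_zero.mpr hne
  have hzval : (z : Fin n → ZMod 2) ≠ 0 := by
    simpa using hzne
  have hzker : H.mulVec (z : Fin n → ZMod 2) = 0 := by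
    have := z.2
    rwa [LinearMap.mem_ker, Matrix.mulVecLin_apply] at this
  have hzA : ∀ u ∈ A, (z : Fin n → ZMod 2) u = 0 := by
    intro u hu
    have : φ z = 0 := by simp [hz, map_sub, hab]
    have := congrFun this ⟨u, hu⟩
    simpa [φ, LinearMap.funLeft] using this
  obtain ⟨v, hv⟩ : ∃ v, (z : Fin n → ZMod 2) v ≠ 0 := by
    by_contra h
    push_neg at h
    exact hzval (funext h)
  have hvA : v ∉ A := fun h => hv (hzA v h)
  have hvB : ∃ i, v ∈ B i := by
    have : v ∈ A ∪ Finset.univ.biUnion B := hcover ▸ Finset.mem_univ v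
    rcases Finset.mem_union.mp this with h | h
    · exact absurd h hvA
    · obtain ⟨i, _, hi⟩ := Finset.mem_biUnion.mp h
      exact ⟨i, hi⟩
  obtain ⟨i, hvBi⟩ := hvB
  set y : Fin n → ZMod 2 := fun u => if u ∈ B i then (z : Fin n → ZMod 2) u else 0 with hy
  have hyker : H.mulVec y = 0 := by
    funext r
    by_cases hcase : ∃ u₀ ∈ B i, H r u₀ ≠ 0 ∧ (z : Fin n → ZMod 2) u₀ ≠ 0
    · obtain ⟨u₀, hu₀B, hu₀H, hu₀z⟩ := hcase
      have : H.mulVec y r = H.mulVec (z : Fin n → ZMod 2) r := by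
        simp only [Matrix.mulVec, dotProduct]
        refine Finset.sum_congr rfl fun u _ => ?_
        by_cases huB : u ∈ B i
        · simp [hy, huB]
        · by_cases hzu : (z : Fin n → ZMod 2) u = 0
          · simp [hy, huB, hzu]
          · by_cases hHu : H r u = 0
            · simp [hy, huB, hHu]
            · exfalso
              have huA : u ∉ A := fun h => hzu (hzA u h)
              have huBj : ∃ j, u ∈ B j := by
                have : u ∈ A ∪ Finset.univ.biUnion B := hcover ▸ Finset.mem_univ u
                rcases Finset.mem_union.mp this with h | h
                · exact absurd h huA
                · obtain ⟨j, _, hj⟩ := Finset.mem_biUnion.mp h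
                  exact ⟨j, hj⟩
              obtain ⟨j, huBj⟩ := huBj
              have hji : j ≠ i := fun h => huB (h ▸ huBj)
              have huu₀ : u ≠ u₀ := by
                intro h
                exact huB (h ▸ hu₀B)
              exact hnoedge j i hji u huBj u₀ hu₀B ⟨huu₀, r, hHu, hu₀H⟩
      rw [this, hzker]

    · push_neg at hcase
      simp only [Matrix.mulVec, dotProduct]
      refine Finset.sum_eq_zero fun u _ => ?_
      by_cases huB : u ∈ B i
      · by_cases hHu : H r u = 0
        · simp [hHu]
        · simp [hy, huB, hcase u huB hHu]
      · simp [hy, huB]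
  have hyne : y ≠ 0 := by
    intro h
    have := congrFun h v
    simp [hy, hvBi] at this
    exact hv this
  have hnorm : hammingNorm y ≤ (B i).card := by
    refine le_trans (le_of_eq rfl) (Finset.card_le_card ?_)
    intro u hu
    simp only [hammingNorm, Finset.mem_filter] at hu
    by_contra huB
    exact hu.2 (by simp [hy, huB])
  calc d ≤ hammingNorm y := hd y hyker hyne
    _ ≤ (B i).card := hnorm
    _ ≤ Finset.univ.sup (fun i => (B i).card) := Finset.le_sup (f := fun i => (B i).card) (Finset.mem_univ i)
end

section
/- Let G be the connectivity graph of an [[n,k,d]] stabilizer code. Suppose the vertices of G are partitioned as A ⊔ B_1 ⊔ ... ⊔ B_s ⊔ C_1 ⊔ ... ⊔ C_r such that no edge joins two distinct B_i's and no edge joins two distinct C_j's. Then either d ≤ max(max_i |B_i|, max_j |C_j|) or k ≤ |A|. -/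
open Finset

variable {V : Type*} [Fintype V] [DecidableEq V]

/-- The symplectic form on `F_2^{2n}`, in the X/Z (symplectic) representation of `n`-qubit
Pauli operators: two Paulis commute iff the form vanishes. -/
def sympl {n : ℕ} (a b : Fin n → ZMod 2 × ZMod 2) : ZMod 2 :=
  ∑ j, ((a j).1 * (b j).2 + (a j).2 * (b j).1)

/-- The weight of a Pauli operator in symplectic representation: the number of qubits on which
it acts nontrivially. -/
def qWeight {n : ℕ} (v : Fin n → ZMod 2 × ZMod 2) : ℕ :=
  (Finset.univ.filter fun j => v j ≠ 0).card

/-- Connectivity graph of a stabilizer code with checks `S`: qubits are vertices, two qubits are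
adjacent iff some check acts nontrivially on both. -/
def qConnGraph {r n : ℕ} (S : Fin r → Fin n → ZMod 2 × ZMod 2) : SimpleGraph (Fin n) where
  Adj u v := u ≠ v ∧ ∃ i, S i u ≠ 0 ∧ S i v ≠ 0
  symm := ⟨fun _ _ ⟨h1, i, ha, hb⟩ => ⟨h1.symm, i, hb, ha⟩⟩
  loopless := ⟨fun _ h => h.1 rfl⟩

instance {r n : ℕ} (S : Fin r → Fin n → ZMod 2 × ZMod 2) : DecidableRel (qConnGraph S).Adj :=
  fun u v => (instDecidableAnd : Decidable (u ≠ v ∧ ∃ i, S i u ≠ 0 ∧ S i v ≠ 0))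

/-- The stabilizer group (modulo phases) generated by the checks `S`. -/
def stabSpan {r n : ℕ} (S : Fin r → Fin n → ZMod 2 × ZMod 2) :
    Submodule (ZMod 2) (Fin n → ZMod 2 × ZMod 2) :=
  Submodule.span (ZMod 2) (Set.range S)

namespace Stmt7Aux

open Finset Module LinearMap


variable {n r : ℕ}

def ωb (n : ℕ) : LinearMap.BilinForm (ZMod 2) (Fin n → ZMod 2 × ZMod 2) :=
  LinearMap.mk₂ (ZMod 2) sympl
    (fun a a' b => by
      unfold sympl
      rw [← Finset.sum_add_distrib]
      exact Finset.sum_congr rfl fun j _ => by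
        simp only [Pi.add_apply, Prod.fst_add, Prod.snd_add]; ring)
    (fun c a b => by
      unfold sympl
      rw [smul_eq_mul, Finset.mul_sum]
      exact Finset.sum_congr rfl fun j _ => by
        simp only [Pi.smul_apply, Prod.smul_fst, Prod.smul_snd, smul_eq_mul]; ring)
    (fun a b b' => by
      unfold sympl
      rw [← Finset.sum_add_distrib]
      exact Finset.sum_congr rfl fun j _ => by
        simp only [Pi.add_apply, Prod.fst_add, Prod.snd_add]; ring)
    (fun c a b => by
      unfold sympl
      rw [smul_eq_mul, Finset.mul_sum]
      exact Finset.sum_congr rfl fun j _ => by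
        simp only [Pi.smul_apply, Prod.smul_fst, Prod.smul_snd, smul_eq_mul]; ring)

@[simp] lemma ωb_apply (a b : Fin n → ZMod 2 × ZMod 2) : ωb n a b = sympl a b := rfl

lemma sympl_comm (a b : Fin n → ZMod 2 × ZMod 2) : sympl a b = sympl b a := by
  unfold sympl; exact Finset.sum_congr rfl fun j _ => by ring

lemma ωb_symm : (ωb n).IsSymm := ⟨fun a b => sympl_comm a b⟩

lemma ωb_refl : (ωb n).IsRefl := ωb_symm.isRefl

lemma sympl_single_left (j : Fin n) (p : ZMod 2 × ZMod 2) (v : Fin n → ZMod 2 × ZMod 2) :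
    sympl (Pi.single j p) v = p.1 * (v j).2 + p.2 * (v j).1 := by
  unfold sympl
  rw [Finset.sum_eq_single j]
  · simp
  · intro i _ hij
    simp [Pi.single_eq_of_ne hij]
  · simp

lemma ωb_nondeg : (ωb n).Nondegenerate := by
  have hL : ∀ v : Fin n → ZMod 2 × ZMod 2, (∀ w, ωb n v w = 0) → v = 0 := by
    intro v hv
    funext j
    have h1 := hv (Pi.single j (1, 0))
    have h2 := hv (Pi.single j (0, 1))
    rw [ωb_apply, sympl_comm, sympl_single_left] at h1 h2
    simp at h1 h2
    exact Prod.ext h2 h1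
  exact ⟨hL, fun v hv => hL v fun w => by rw [ωb_apply, sympl_comm, ← ωb_apply]; exact hv w⟩

def coordSub (n : ℕ) (R : Finset (Fin n)) : Submodule (ZMod 2) (Fin n → ZMod 2 × ZMod 2) where
  carrier := {v | ∀ j ∉ R, v j = 0}
  zero_mem' := fun j _ => rfl
  add_mem' := fun {a b} ha hb j hj => by simp [ha j hj, hb j hj]
  smul_mem' := fun c a ha j hj => by simp [ha j hj]

lemma mem_coordSub {R : Finset (Fin n)} {v : Fin n → ZMod 2 × ZMod 2} :
    v ∈ coordSub n R ↔ ∀ j ∉ R, v j = 0 := Iff.rfl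

lemma coordSub_mono {R R' : Finset (Fin n)} (h : R ⊆ R') : coordSub n R ≤ coordSub n R' :=
  fun v hv j hj => hv j fun hjR => hj (h hjR)

def extMap (n : ℕ) (R : Finset (Fin n)) :
    ((↥R) → ZMod 2 × ZMod 2) →ₗ[ZMod 2] (Fin n → ZMod 2 × ZMod 2) where
  toFun f j := if h : j ∈ R then f ⟨j, h⟩ else 0
  map_add' f g := by funext j; by_cases h : j ∈ R <;> simp [h]
  map_smul' c f := by funext j; by_cases h : j ∈ R <;> simp [h]

lemma extMap_inj (R : Finset (Fin n)) : Function.Injective (extMap n R) := by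
  intro f g h
  funext j
  have := congrFun h (j : Fin n)
  simpa [extMap, j.2] using this

lemma range_extMap (R : Finset (Fin n)) : LinearMap.range (extMap n R) = coordSub n R := by
  ext v
  constructor
  · rintro ⟨f, rfl⟩ j hj
    simp [extMap, hj]
  · intro hv
    refine ⟨fun j => v j, ?_⟩
    funext j
    by_cases h : j ∈ R
    · simp [extMap, h]
    · simp [extMap, h, (hv j h).symm]

lemma finrank_coordSub (R : Finset (Fin n)) :
    finrank (ZMod 2) (coordSub n R) = 2 * R.card := by
  rw [← range_extMap, LinearMap.finrank_range_of_inj (extMap_inj R)]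
  rw [Module.finrank_pi_fintype]
  simp [Module.finrank_prod, Fintype.card_coe, mul_comm]

-- new material

lemma sympl_eq_zero_of_disjoint_support {R : Finset (Fin n)} {u v : Fin n → ZMod 2 × ZMod 2}
    (hu : ∀ j ∈ R, u j = 0) (hv : ∀ j ∉ R, v j = 0) : sympl u v = 0 := by
  unfold sympl
  apply Finset.sum_eq_zero
  intro j _
  by_cases h : j ∈ R
  · simp [hu j h]
  · simp [hv j h]

lemma orthogonal_coordSub (R : Finset (Fin n)) :
    (ωb n).orthogonal (coordSub n Rᶜ) = coordSub n R := by
  ext v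
  rw [LinearMap.BilinForm.mem_orthogonal_iff, mem_coordSub]
  constructor
  · intro h j hj
    have h1 := h (Pi.single j (1, 0)) ?_
    · have h2 := h (Pi.single j (0, 1)) ?_
      · rw [ωb_apply, sympl_single_left] at h1 h2
        simp at h1 h2
        exact Prod.ext h2 h1
      · intro i hi
        exact Pi.single_eq_of_ne (fun he => hi (by rw [he]; exact Finset.mem_compl.mpr hj)) _
    · intro i hi
      exact Pi.single_eq_of_ne (fun he => hi (by rw [he]; exact Finset.mem_compl.mpr hj)) _
  · intro hv u hu
    rw [ωb_apply]
    exact sympl_eq_zero_of_disjoint_support (fun j hj => hu j (by simp [hj])) hv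

lemma orthogonal_sup (W₁ W₂ : Submodule (ZMod 2) (Fin n → ZMod 2 × ZMod 2)) :
    (ωb n).orthogonal (W₁ ⊔ W₂) = (ωb n).orthogonal W₁ ⊓ (ωb n).orthogonal W₂ := by
  apply le_antisymm
  · exact le_inf (LinearMap.BilinForm.orthogonal_le le_sup_left)
      (LinearMap.BilinForm.orthogonal_le le_sup_right)
  · rintro v ⟨h1, h2⟩ u hu
    obtain ⟨u₁, hu₁, u₂, hu₂, rfl⟩ := Submodule.mem_sup.mp hu
    have := h1 u₁ hu₁
    have := h2 u₂ hu₂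
    rw [map_add, LinearMap.add_apply, h1 u₁ hu₁, h2 u₂ hu₂, add_zero]

lemma mem_orthogonal_stabSpan (S : Fin r → Fin n → ZMod 2 × ZMod 2)
    {v : Fin n → ZMod 2 × ZMod 2} :
    v ∈ (ωb n).orthogonal (stabSpan S) ↔ ∀ i, sympl (S i) v = 0 := by
  constructor
  · intro h i
    exact h (S i) (Submodule.subset_span ⟨i, rfl⟩)
  · intro h u hu
    have : stabSpan S ≤ LinearMap.ker ((ωb n).flip v) := by
      rw [stabSpan, Submodule.span_le]
      rintro _ ⟨i, rfl⟩
      simpa using h i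
    exact this hu

lemma stabSpan_le_orthogonal (S : Fin r → Fin n → ZMod 2 × ZMod 2)
    (hcomm : ∀ i j, sympl (S i) (S j) = 0) :
    stabSpan S ≤ (ωb n).orthogonal (stabSpan S) := by
  rw [stabSpan, Submodule.span_le]
  rintro _ ⟨j, rfl⟩
  exact (mem_orthogonal_stabSpan S).mpr (fun i => hcomm i j)

/-- The key dimension count for a correctable region `R`. -/
lemma dim_count (S : Fin r → Fin n → ZMod 2 × ZMod 2)
    (hcomm : ∀ i j, sympl (S i) (S j) = 0)
    (R : Finset (Fin n))
    (hcorr : (ωb n).orthogonal (stabSpan S) ⊓ coordSub n R ≤ stabSpan S) :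
    finrank (ZMod 2) (stabSpan S ⊓ coordSub n R : Submodule (ZMod 2) _)
      + finrank (ZMod 2) (stabSpan S) + 2 * Rᶜ.card
      = 2 * n + finrank (ZMod 2) (stabSpan S ⊓ coordSub n Rᶜ : Submodule (ZMod 2) _) := by
  set 𝒮 := stabSpan S
  have heq : (ωb n).orthogonal (𝒮 ⊔ coordSub n Rᶜ) = 𝒮 ⊓ coordSub n R := by
    rw [orthogonal_sup, orthogonal_coordSub R]
    apply le_antisymm
    · intro v hv
      exact ⟨hcorr ⟨hv.1, hv.2⟩, hv.2⟩
    · exact inf_le_inf_right _ (stabSpan_le_orthogonal S hcomm)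
  have hdim := LinearMap.BilinForm.finrank_add_finrank_orthogonal (B := ωb n) ωb_refl
      (𝒮 ⊔ coordSub n Rᶜ)
  rw [LinearMap.BilinForm.orthogonal_top_eq_bot ωb_nondeg, inf_bot_eq, finrank_bot,
    add_zero, heq] at hdim
  have htot : finrank (ZMod 2) (Fin n → ZMod 2 × ZMod 2) = 2 * n := by
    rw [Module.finrank_pi_fintype]
    simp [Module.finrank_prod, mul_comm]
  rw [htot] at hdim
  have hsup := Submodule.finrank_sup_add_finrank_inf_eq 𝒮 (coordSub n Rᶜ)
  rw [finrank_coordSub] at hsup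
  omega


lemma corrUnion {d s : ℕ} (S : Fin r → Fin n → ZMod 2 × ZMod 2)
    (B : Fin s → Finset (Fin n))
    (hdisj : ∀ i j, i ≠ j → Disjoint (B i) (B j))
    (hnoedge : ∀ i j, i ≠ j → ∀ u ∈ B i, ∀ v ∈ B j, ¬ (qConnGraph S).Adj u v)
    (hsize : ∀ i, (B i).card < d)
    (hd : ∀ v, (∀ i, sympl (S i) v = 0) → v ∉ stabSpan S → d ≤ qWeight v)
    (v : Fin n → ZMod 2 × ZMod 2)
    (hv1 : ∀ p, sympl (S p) v = 0)
    (hv2 : v ∈ coordSub n (Finset.univ.biUnion B)) :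
    v ∈ stabSpan S := by
  classical
  set vres : Fin s → (Fin n → ZMod 2 × ZMod 2) :=
    fun i j => if j ∈ B i then v j else 0 with hvres
  have hsum : v = ∑ i, vres i := by
    funext j
    rw [Finset.sum_apply]
    by_cases hj : j ∈ Finset.univ.biUnion B
    · obtain ⟨i0, -, hi0⟩ := Finset.mem_biUnion.mp hj
      rw [Finset.sum_eq_single i0]
      · simp [hvres, hi0]
      · intro i _ hne
        have hni : j ∉ B i := fun h => (Finset.disjoint_left.mp (hdisj i i0 hne)) h hi0
        simp [hvres, hni]
      · simp
    · rw [Finset.sum_eq_zero, hv2 j hj]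
      intro i _
      have hni : j ∉ B i := fun h => hj (Finset.mem_biUnion.mpr ⟨i, Finset.mem_univ i, h⟩)
      simp [hvres, hni]
  have horth : ∀ p i, sympl (S p) (vres i) = 0 := by
    intro p i
    by_cases hsupp : ∃ u ∈ B i, S p u ≠ 0
    · obtain ⟨u, hu, hSu⟩ := hsupp
      have hz : ∀ i', i' ≠ i → sympl (S p) (vres i') = 0 := by
        intro i' hne
        unfold sympl
        apply Finset.sum_eq_zero
        intro j _
        by_cases hj : j ∈ B i'
        · by_cases hSj : S p j = 0
          · simp [hSj]
          · exfalso
            refine hnoedge i' i hne j hj u hu (show j ≠ u ∧ ∃ i, S i j ≠ 0 ∧ S i u ≠ 0 from ⟨?_, p, hSj, hSu⟩)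
            intro he
            exact (Finset.disjoint_left.mp (hdisj i' i hne)) hj (by rw [he]; exact hu)
        · simp [hvres, hj]
      have hv' := hv1 p
      rw [hsum] at hv'
      have hms : sympl (S p) (∑ i', vres i') = ∑ i', sympl (S p) (vres i') := by
        have := map_sum (ωb n (S p)) vres Finset.univ
        simpa only [ωb_apply] using this
      rw [hms, Finset.sum_eq_single i] at hv'
      · exact hv'
      · exact fun i' _ hne => hz i' hne
      · simp
    · push_neg at hsupp
      unfold sympl
      apply Finset.sum_eq_zero
      intro j _
      by_cases hj : j ∈ B i
      · simp [hsupp j hj]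
      · simp [hvres, hj]
  have hmem : ∀ i, vres i ∈ stabSpan S := by
    intro i
    by_contra hnot
    have hw := hd (vres i) (fun p => horth p i) hnot
    have hle : qWeight (vres i) ≤ (B i).card := by
      unfold qWeight
      apply Finset.card_le_card
      intro j hj
      rw [Finset.mem_filter] at hj
      by_contra hjB
      exact hj.2 (by simp [hvres, hjB])
    have := hsize i
    omega
  rw [hsum]
  exact Submodule.sum_mem _ fun i _ => hmem i

end Stmt7Aux


open Module in
/-- Partition lemma for stabilizer codes: if the qubits of an `[[n,k,d]]` stabilizer code are
partitioned into `A ⊔ B_1 ⊔ ... ⊔ B_s ⊔ C_1 ⊔ ... ⊔ C_t` with no edge of the connectivity graph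
joining two distinct `B_i`'s nor two distinct `C_j`'s, then `d ≤ max(max_i |B_i|, max_j |C_j|)`
or `k ≤ |A|`. -/
theorem stmt7 (n r k d s t : ℕ) (S : Fin r → Fin n → ZMod 2 × ZMod 2)
    (hcomm : ∀ i j, sympl (S i) (S j) = 0)
    (hk : k + Module.finrank (ZMod 2) (stabSpan S) = n)
    (hd : ∀ v : Fin n → ZMod 2 × ZMod 2, (∀ i, sympl (S i) v = 0) → v ∉ stabSpan S →
      d ≤ qWeight v)
    (A : Finset (Fin n)) (B : Fin s → Finset (Fin n)) (C : Fin t → Finset (Fin n))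
    (hdisjB : ∀ i j, i ≠ j → Disjoint (B i) (B j))
    (hdisjC : ∀ i j, i ≠ j → Disjoint (C i) (C j))
    (hdisjBC : ∀ i j, Disjoint (B i) (C j))
    (hdisjAB : ∀ i, Disjoint A (B i)) (hdisjAC : ∀ j, Disjoint A (C j))
    (hcover : A ∪ Finset.univ.biUnion B ∪ Finset.univ.biUnion C = Finset.univ)
    (hnoedgeB : ∀ i j, i ≠ j → ∀ u ∈ B i, ∀ v ∈ B j, ¬ (qConnGraph S).Adj u v)
    (hnoedgeC : ∀ i j, i ≠ j → ∀ u ∈ C i, ∀ v ∈ C j, ¬ (qConnGraph S).Adj u v) :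
    d ≤ max (Finset.univ.sup fun i => (B i).card) (Finset.univ.sup fun j => (C j).card) ∨
      k ≤ A.card := by
  classical
  by_cases hmax : d ≤ max (Finset.univ.sup fun i => (B i).card)
      (Finset.univ.sup fun j => (C j).card)
  · exact Or.inl hmax
  right
  push_neg at hmax
  have hmB : (Finset.univ.sup fun i => (B i).card) < d := lt_of_le_of_lt le_sup_left hmax
  have hmC : (Finset.univ.sup fun j => (C j).card) < d := lt_of_le_of_lt le_sup_right hmax
  have hsB : ∀ i, (B i).card < d := fun i =>
    lt_of_le_of_lt (Finset.le_sup (f := fun i => (B i).card) (Finset.mem_univ i)) hmB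
  have hsC : ∀ j, (C j).card < d := fun j =>
    lt_of_le_of_lt (Finset.le_sup (f := fun j => (C j).card) (Finset.mem_univ j)) hmC
  set RB := Finset.univ.biUnion B with hRB
  set RC := Finset.univ.biUnion C with hRC
  -- correctability of the two unions
  have hcorrB : (Stmt7Aux.ωb n).orthogonal (stabSpan S) ⊓ Stmt7Aux.coordSub n RB ≤
      stabSpan S := by
    rintro v ⟨hvL, hvP⟩
    exact Stmt7Aux.corrUnion S B hdisjB hnoedgeB hsB hd v
      ((Stmt7Aux.mem_orthogonal_stabSpan S).mp hvL) hvP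
  have hcorrC : (Stmt7Aux.ωb n).orthogonal (stabSpan S) ⊓ Stmt7Aux.coordSub n RC ≤
      stabSpan S := by
    rintro v ⟨hvL, hvP⟩
    exact Stmt7Aux.corrUnion S C hdisjC hnoedgeC hsC hd v
      ((Stmt7Aux.mem_orthogonal_stabSpan S).mp hvL) hvP
  have hcntB := Stmt7Aux.dim_count S hcomm RB hcorrB
  have hcntC := Stmt7Aux.dim_count S hcomm RC hcorrC
  -- disjointness facts
  have hdisjRBRC : Disjoint RB RC := by
    rw [hRB, hRC, Finset.disjoint_biUnion_left]
    intro i _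
    rw [Finset.disjoint_biUnion_right]
    exact fun j _ => hdisjBC i j
  have hBsub : RB ⊆ RCᶜ := fun x hx =>
    Finset.mem_compl.mpr (Finset.disjoint_left.mp hdisjRBRC hx)
  have hCsub : RC ⊆ RBᶜ := fun x hx =>
    Finset.mem_compl.mpr (Finset.disjoint_right.mp hdisjRBRC hx)
  have hmono1 : finrank (ZMod 2) (stabSpan S ⊓ Stmt7Aux.coordSub n RB :
        Submodule (ZMod 2) _) ≤
      finrank (ZMod 2) (stabSpan S ⊓ Stmt7Aux.coordSub n RCᶜ : Submodule (ZMod 2) _) :=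
    Submodule.finrank_mono (inf_le_inf_left _ (Stmt7Aux.coordSub_mono hBsub))
  have hmono2 : finrank (ZMod 2) (stabSpan S ⊓ Stmt7Aux.coordSub n RC :
        Submodule (ZMod 2) _) ≤
      finrank (ZMod 2) (stabSpan S ⊓ Stmt7Aux.coordSub n RBᶜ : Submodule (ZMod 2) _) :=
    Submodule.finrank_mono (inf_le_inf_left _ (Stmt7Aux.coordSub_mono hCsub))
  -- cardinalities
  have hdAB : Disjoint A RB := by
    rw [hRB, Finset.disjoint_biUnion_right]
    exact fun i _ => hdisjAB i
  have hdAC : Disjoint (A ∪ RB) RC := by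
    rw [hRC, Finset.disjoint_biUnion_right]
    intro j _
    rw [Finset.disjoint_union_left]
    refine ⟨hdisjAC j, ?_⟩
    rw [hRB, Finset.disjoint_biUnion_left]
    exact fun i _ => hdisjBC i j
  have hcards : A.card + RB.card + RC.card = n := by
    have h1 := Finset.card_union_of_disjoint hdAB
    have h2 := Finset.card_union_of_disjoint hdAC
    rw [hcover] at h2
    rw [Finset.card_univ, Fintype.card_fin] at h2
    omega
  have hcB : RBᶜ.card = n - RB.card := by
    rw [Finset.card_compl, Fintype.card_fin]
  have hcC : RCᶜ.card = n - RC.card := by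
    rw [Finset.card_compl, Fintype.card_fin]
  have hleB : RB.card ≤ n := by
    simpa [Fintype.card_fin] using Finset.card_le_univ RB
  have hleC : RC.card ≤ n := by
    simpa [Fintype.card_fin] using Finset.card_le_univ RC
  omega
end

section
/- Let C be a classical [n,k,d] code whose connectivity graph G on n vertices has no induced ε-expander subgraph on m or more vertices. Then either d ≤ 3m or k ≤ 2c·log(n)·εn, where c is a universal constant. -/
open Finset

variable {V : Type*} [Fintype V] [DecidableEq V]

private lemma restrict_codeword {r n : ℕ} (H : Matrix (Fin r) (Fin n) (ZMod 2))
    (U W T : Finset (Fin n))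
    (hT : ∀ u v, u ∈ W → v ∈ U → v ∉ W → (connGraph H).Adj u v → u ∈ T)
    (x : Fin n → ZMod 2) (hx : H.mulVec x = 0)
    (hxU : ∀ v, x v ≠ 0 → v ∈ U) (hxT : ∀ u ∈ T, x u = 0) :
    H.mulVec (fun v => if v ∈ W then x v else 0) = 0 := by
  funext i
  have hrow : ∑ v, H i v * x v = 0 := by
    have := congrFun hx i
    simpa [Matrix.mulVec, dotProduct] using this
  have hgoal : (H.mulVec (fun v => if v ∈ W then x v else 0)) i
      = ∑ v, (if v ∈ W then H i v * x v else 0) := by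
    simp [Matrix.mulVec, dotProduct, mul_ite, mul_zero]
  rw [hgoal]
  by_cases hA : ∀ u ∈ W, H i u * x u = 0
  · refine Finset.sum_eq_zero fun v _ => ?_
    split
    · exact hA v ‹_›
    · rfl
  · push_neg at hA
    obtain ⟨u, huW, hu⟩ := hA
    have hout : ∀ v, v ∉ W → H i v * x v = 0 := by
      intro v hvW
      by_contra hv
      have hHv : H i v ≠ 0 := fun h => hv (by simp [h])
      have hxv : x v ≠ 0 := fun h => hv (by simp [h])
      have hHu : H i u ≠ 0 := fun h => hu (by simp [h])
      have hxu : x u ≠ 0 := fun h => hu (by simp [h])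
      have hadj : (connGraph H).Adj u v := ⟨fun h => hvW (h ▸ huW), i, hHu, hHv⟩
      exact hxu (hxT u (hT u v huW (hxU v hxv) hvW hadj))
    calc ∑ v, (if v ∈ W then H i v * x v else 0) = ∑ v, H i v * x v := by
          refine Finset.sum_congr rfl fun v _ => ?_
          split
          · rfl
          · exact (hout v ‹_›).symm
      _ = 0 := hrow

private lemma key_partition {r n : ℕ} (H : Matrix (Fin r) (Fin n) (ZMod 2)) (ε : ℝ)
    (hε : 0 ≤ ε) (m : ℕ)
    (hexp : ∀ U : Finset (Fin n), m ≤ U.card → ¬ IsExpanderOn (connGraph H) U ε)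
    (hsmall : ∀ x : Fin n → ZMod 2, H.mulVec x = 0 → hammingNorm x < m → x = 0) :
    ∀ N (U : Finset (Fin n)), U.card ≤ N →
      ∃ S : Finset (Fin n), S ⊆ U ∧
        ((S.card : ℝ) ≤ 2 * ε * U.card * Real.logb 2 U.card) ∧
        ∀ x : Fin n → ZMod 2, H.mulVec x = 0 → (∀ v, x v ≠ 0 → v ∈ U ∧ v ∉ S) → x = 0 := by
  have hlogb : ∀ t : ℕ, 0 ≤ Real.logb 2 (t : ℝ) := by
    intro t
    rcases Nat.eq_zero_or_pos t with h | h
    · simp [h]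
    · exact Real.logb_nonneg one_lt_two (by exact_mod_cast h)
  intro N
  induction N using Nat.strong_induction_on with
  | _ N IH =>
  intro U hUN
  by_cases hU : U.card < m
  · refine ⟨∅, empty_subset _, by
      simpa using mul_nonneg (by positivity : (0:ℝ) ≤ 2 * ε * U.card) (hlogb U.card), ?_⟩
    intro x hx hsupp
    refine hsmall x hx (lt_of_le_of_lt ?_ hU)
    rw [hammingNorm]
    exact Finset.card_le_card fun v hv => (hsupp v (Finset.mem_filter.mp hv).2).1
  · push_neg at hU
    have hnexp := hexp U hU
    rw [IsExpanderOn] at hnexp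
    push_neg at hnexp
    obtain ⟨W, hWU, h2W, hlt⟩ := hnexp
    have hWpos : 0 < W.card := by
      rcases Nat.eq_zero_or_pos W.card with h | h
      · exfalso
        rw [h] at hlt
        have : (0 : ℝ) ≤ (bdryIn (connGraph H) U W : ℝ) := Nat.cast_nonneg _
        push_cast at hlt
        linarith
      · exact h
    have hWlt : W.card < U.card := by omega
    have hcardWU : W.card ≤ U.card := Finset.card_le_card hWU
    have hsd : (U \ W).card = U.card - W.card := Finset.card_sdiff_of_subset hWU
    have hsdlt : (U \ W).card < U.card := by omega
    obtain ⟨S₁, hS₁sub, hS₁card, hS₁prop⟩ :=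
      IH W.card (lt_of_lt_of_le hWlt hUN) W le_rfl
    obtain ⟨S₂, hS₂sub, hS₂card, hS₂prop⟩ :=
      IH (U \ W).card (lt_of_lt_of_le hsdlt hUN) (U \ W) le_rfl
    set P : Finset (Fin n × Fin n) :=
      (W ×ˢ (U \ W)).filter (fun p => (connGraph H).Adj p.1 p.2) with hP
    set T : Finset (Fin n) := P.image Prod.fst ∪ P.image Prod.snd with hTdef
    have hPcard : P.card = bdryIn (connGraph H) U W := rfl
    have hTcard : T.card ≤ 2 * P.card := by
      calc T.card ≤ (P.image Prod.fst).card + (P.image Prod.snd).card :=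
            Finset.card_union_le _ _
        _ ≤ P.card + P.card := add_le_add (Finset.card_image_le) (Finset.card_image_le)
        _ = 2 * P.card := by ring
    have hTU : T ⊆ U := by
      intro v hv
      rcases Finset.mem_union.mp hv with h | h
      · obtain ⟨p, hp, rfl⟩ := Finset.mem_image.mp h
        exact hWU (Finset.mem_product.mp (Finset.mem_filter.mp hp).1).1
      · obtain ⟨p, hp, rfl⟩ := Finset.mem_image.mp h
        exact (Finset.mem_sdiff.mp
          (Finset.mem_product.mp (Finset.mem_filter.mp hp).1).2).1
    refine ⟨S₁ ∪ S₂ ∪ T, ?_, ?_, ?_⟩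
    · exact Finset.union_subset (Finset.union_subset (hS₁sub.trans hWU)
        (hS₂sub.trans (Finset.sdiff_subset))) hTU
    · -- cardinality bound
      have hcard : ((S₁ ∪ S₂ ∪ T).card : ℝ) ≤ (S₁.card : ℝ) + S₂.card + T.card := by
        have h1 : (S₁ ∪ S₂ ∪ T).card ≤ (S₁ ∪ S₂).card + T.card := Finset.card_union_le _ _
        have h2 : (S₁ ∪ S₂).card ≤ S₁.card + S₂.card := Finset.card_union_le _ _
        have h3 : (S₁ ∪ S₂ ∪ T).card ≤ S₁.card + S₂.card + T.card := by omega
        exact_mod_cast h3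
      have hTcardR : (T.card : ℝ) ≤ 2 * ε * W.card := by
        have h1 : (T.card : ℝ) ≤ 2 * (P.card : ℝ) := by exact_mod_cast hTcard
        have h2 : (P.card : ℝ) < ε * W.card := by rw [hPcard]; exact hlt
        linarith
      have hw1 : (1 : ℝ) ≤ (W.card : ℝ) := by exact_mod_cast hWpos
      have h2wu : 2 * (W.card : ℝ) ≤ (U.card : ℝ) := by exact_mod_cast h2W
      have hsdcast : ((U \ W).card : ℝ) = (U.card : ℝ) - W.card := by
        rw [hsd]; push_cast [hcardWU]; ring
      have hlog1 : Real.logb 2 (W.card : ℝ) + 1 ≤ Real.logb 2 (U.card : ℝ) := by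
        have hmul : Real.logb 2 (2 * (W.card : ℝ))
            = 1 + Real.logb 2 (W.card : ℝ) := by
          rw [Real.logb_mul two_ne_zero (by linarith), Real.logb_self_eq_one one_lt_two]
        have hmono : Real.logb 2 (2 * (W.card : ℝ)) ≤ Real.logb 2 (U.card : ℝ) :=
          Real.logb_le_logb_of_le one_lt_two (by linarith) h2wu
        linarith
      have hlog2 : Real.logb 2 ((U \ W).card : ℝ) ≤ Real.logb 2 (U.card : ℝ) := by
        rcases Nat.eq_zero_or_pos (U \ W).card with h | h
        · rw [h]; push_cast; simp; exact hlogb U.card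
        · exact Real.logb_le_logb_of_le one_lt_two (by exact_mod_cast h)
            (by exact_mod_cast Finset.card_le_card (Finset.sdiff_subset))
      have hεw : (0 : ℝ) ≤ 2 * ε * W.card := by positivity
      have hεsd : (0 : ℝ) ≤ 2 * ε * ((U \ W).card : ℝ) := by positivity
      have e1 : 2 * ε * W.card * Real.logb 2 (W.card : ℝ)
          ≤ 2 * ε * W.card * (Real.logb 2 (U.card : ℝ) - 1) :=
        mul_le_mul_of_nonneg_left (by linarith) hεw
      have e2 : 2 * ε * ((U \ W).card : ℝ) * Real.logb 2 ((U \ W).card : ℝ)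
          ≤ 2 * ε * ((U \ W).card : ℝ) * Real.logb 2 (U.card : ℝ) :=
        mul_le_mul_of_nonneg_left hlog2 hεsd
      rw [hsdcast] at e2
      calc ((S₁ ∪ S₂ ∪ T).card : ℝ) ≤ (S₁.card : ℝ) + S₂.card + T.card := hcard
        _ ≤ 2 * ε * W.card * Real.logb 2 (W.card : ℝ)
            + 2 * ε * ((U \ W).card : ℝ) * Real.logb 2 ((U \ W).card : ℝ)
            + 2 * ε * W.card := by linarith
        _ ≤ 2 * ε * (U.card : ℝ) * Real.logb 2 (U.card : ℝ) := by
            rw [hsdcast]; nlinarith [e1, e2]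
    · -- codeword property
      intro x hx hsupp
      have hT1 : ∀ u v, u ∈ W → v ∈ U → v ∉ W → (connGraph H).Adj u v → u ∈ T := by
        intro u v hu hv hvW hadj
        have hpP : (u, v) ∈ P := by
          rw [hP, Finset.mem_filter, Finset.mem_product]
          exact ⟨⟨hu, Finset.mem_sdiff.mpr ⟨hv, hvW⟩⟩, hadj⟩
        exact Finset.mem_union_left _ (Finset.mem_image.mpr ⟨(u, v), hpP, rfl⟩)
      have hxT : ∀ u ∈ T, x u = 0 := by
        intro u hu
        by_contra h
        exact (hsupp u h).2 (Finset.mem_union_right _ hu)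
      have hy : H.mulVec (fun v => if v ∈ W then x v else 0) = 0 :=
        restrict_codeword H U W T hT1 x hx (fun v hv => (hsupp v hv).1) hxT
      have hy0 : (fun v => if v ∈ W then x v else 0) = 0 := by
        refine hS₁prop _ hy fun v hv => ?_
        by_cases hvW : v ∈ W
        · simp only [hvW, if_true] at hv
          exact ⟨hvW, fun hvS₁ => (hsupp v hv).2
            (Finset.mem_union_left _ (Finset.mem_union_left _ hvS₁))⟩
        · simp [hvW] at hv
      have hxW : ∀ v ∈ W, x v = 0 := by
        intro v hv
        have := congrFun hy0 v
        simpa [hv] using this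
      refine hS₂prop x hx fun v hv => ?_
      have hvU := (hsupp v hv).1
      have hvW : v ∉ W := fun h => hv (hxW v h)
      exact ⟨Finset.mem_sdiff.mpr ⟨hvU, hvW⟩, fun hvS₂ => (hsupp v hv).2
        (Finset.mem_union_left _ (Finset.mem_union_right _ hvS₂))⟩

/-- There is a universal constant `c` such that any classical `[n,k,d]` code whose connectivity
graph has no induced `ε`-expander subgraph on `m` or more vertices obeys `d ≤ 3m` or
`k ≤ 2c·log(n)·εn`. -/
theorem stmt8 : ∃ c : ℝ, 0 < c ∧
    ∀ (n r k d m : ℕ) (H : Matrix (Fin r) (Fin n) (ZMod 2)) (ε : ℝ), 0 ≤ ε →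
      Module.finrank (ZMod 2) (LinearMap.ker H.mulVecLin) = k →
      (∀ x : Fin n → ZMod 2, H.mulVec x = 0 → x ≠ 0 → d ≤ hammingNorm x) →
      (¬ ∃ U : Finset (Fin n), m ≤ U.card ∧ IsExpanderOn (connGraph H) U ε) →
      (d ≤ 3 * m ∨ (k : ℝ) ≤ 2 * c * Real.log n * ε * n) := by
  refine ⟨1 / Real.log 2, by positivity, ?_⟩
  intro n r k d m H ε hε hk hd hnex
  by_cases hdm : d ≤ 3 * m
  · exact Or.inl hdm
  push_neg at hdm
  right
  have hexp : ∀ U : Finset (Fin n), m ≤ U.card → ¬ IsExpanderOn (connGraph H) U ε :=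
    fun U hm h => hnex ⟨U, hm, h⟩
  have hsmall : ∀ x : Fin n → ZMod 2, H.mulVec x = 0 → hammingNorm x < m → x = 0 := by
    intro x hx hn
    by_contra hx0
    have := hd x hx hx0
    omega
  obtain ⟨S, hSsub, hScard, hSprop⟩ :=
    key_partition H ε hε m hexp hsmall n Finset.univ (by simp)
  -- k ≤ |S|
  have hkS : k ≤ S.card := by
    let φ : (LinearMap.ker H.mulVecLin) →ₗ[ZMod 2] (↥S → ZMod 2) :=
      { toFun := fun x s => x.1 s
        map_add' := fun a b => rfl
        map_smul' := fun c a => rfl }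
    have hinj : Function.Injective φ := by
      refine (injective_iff_map_eq_zero φ).mpr fun a ha => ?_
      have hcode : H.mulVec a.1 = 0 := by
        have := a.2
        rwa [LinearMap.mem_ker, Matrix.mulVecLin_apply] at this
      have ha0 : (a : Fin n → ZMod 2) = 0 := by
        refine hSprop a.1 hcode fun v hv => ⟨Finset.mem_univ v, fun hvS => ?_⟩
        have := congrFun ha ⟨v, hvS⟩
        exact hv this
      exact Subtype.ext ha0
    have := LinearMap.finrank_le_finrank_of_injective hinj
    rw [hk] at this
    simpa [Module.finrank_pi] using this
  have hcu : ((Finset.univ : Finset (Fin n)).card : ℝ) = (n : ℝ) := by simp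
  calc (k : ℝ) ≤ (S.card : ℝ) := by exact_mod_cast hkS
    _ ≤ 2 * ε * n * Real.logb 2 (n : ℝ) := by rw [hcu] at hScard; exact hScard
    _ = 2 * (1 / Real.log 2) * Real.log n * ε * n := by rw [Real.logb]; ring
end

section
/- Let C be a classical [n,k,d] code with connectivity graph G. Then there exist vertex subsets K_1, ..., K_t of G such that Σ_i |K_i| ≥ k/2, |K_i| ≥ d/3 for each i, and each induced subgraph G[K_i] is an Ω(k/(n·polylog(n)))-expander. -/
open Finset

variable {V : Type*} [Fintype V] [DecidableEq V]

set_option linter.unusedSectionVars false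
set_option maxHeartbeats 1000000

lemma bdryTo_eq_sum (G : SimpleGraph V) [DecidableRel G.Adj] (A B : Finset V) :
    bdryTo G A B = ∑ a ∈ A, (B.filter (G.Adj a)).card := by
  unfold bdryTo
  rw [Finset.card_filter, Finset.sum_product]
  refine Finset.sum_congr rfl fun a _ => ?_
  rw [Finset.card_filter]

lemma bdryTo_comm (G : SimpleGraph V) [DecidableRel G.Adj] (A B : Finset V) :
    bdryTo G A B = bdryTo G B A := by
  unfold bdryTo
  refine Finset.card_bij' (fun p _ => p.swap) (fun p _ => p.swap) ?_ ?_ ?_ ?_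
  · intro p hp
    rw [Finset.mem_filter, Finset.mem_product] at hp ⊢
    exact ⟨⟨hp.1.2, hp.1.1⟩, hp.2.symm⟩
  · intro p hp
    rw [Finset.mem_filter, Finset.mem_product] at hp ⊢
    exact ⟨⟨hp.1.2, hp.1.1⟩, hp.2.symm⟩
  · intro p _; rfl
  · intro p _; rfl

lemma card_filter_exists_le_bdryTo (G : SimpleGraph V) [DecidableRel G.Adj] (A B : Finset V) :
    (A.filter fun a => ∃ b ∈ B, G.Adj a b).card ≤ bdryTo G A B := by
  rw [bdryTo_eq_sum, Finset.card_filter]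
  apply Finset.sum_le_sum
  intro a _
  by_cases hex : ∃ b ∈ B, G.Adj a b
  · obtain ⟨b, hb, hab⟩ := hex
    have : 0 < (B.filter (G.Adj a)).card := Finset.card_pos.2 ⟨b, Finset.mem_filter.2 ⟨hb, hab⟩⟩
    simp only [if_pos (⟨b, hb, hab⟩ : ∃ b ∈ B, G.Adj a b)]
    omega
  · simp [hex]

lemma decomp (G : SimpleGraph V) [DecidableRel G.Adj] (δ : ℝ) (hδ : 0 ≤ δ) (K : Finset V) :
    ∃ (P : Finset (Finset V)) (S : Finset V),
      (∀ A ∈ P, A ⊆ K) ∧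
      (∀ A ∈ P, IsExpanderOn G A δ) ∧
      (∀ a ∈ K, ∃ A ∈ P, a ∈ A) ∧
      (∀ A ∈ P, ∀ B ∈ P, ∀ a, a ∈ A → a ∈ B → A = B) ∧
      S ⊆ K ∧
      ((S.card : ℝ) ≤ 2 * δ * K.card * Real.logb 2 K.card) ∧
      (∀ a b, a ∈ K → b ∈ K → G.Adj a b → (∀ A ∈ P, ¬(a ∈ A ∧ b ∈ A)) → a ∈ S ∧ b ∈ S) := by
  induction K using Finset.strongInductionOn with
  | _ K ih =>
  have hlogK : (0:ℝ) ≤ Real.logb 2 K.card := by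
    rcases Nat.eq_zero_or_pos K.card with h | h
    · simp [h, Real.logb]
    · exact Real.logb_nonneg one_lt_two (by exact_mod_cast h)
  by_cases hexp : IsExpanderOn G K δ
  · refine ⟨{K}, ∅, ?_, ?_, ?_, ?_, ?_, ?_, ?_⟩
    · simp
    · simpa using hexp
    · intro a ha; exact ⟨K, by simp, ha⟩
    · simp
    · simp
    · simp only [Finset.card_empty, Nat.cast_zero]
      positivity
    · intro a b ha hb _ hno
      exact absurd ⟨ha, hb⟩ (hno K (by simp))
  · rw [IsExpanderOn] at hexp
    push_neg at hexp
    obtain ⟨W, hWK, hW2, hWb⟩ := hexp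
    have hW0 : 0 < W.card := by
      rcases Nat.eq_zero_or_pos W.card with h | h
      · exfalso
        rw [h] at hWb
        simp at hWb
        have : (0:ℝ) ≤ (bdryIn G K W : ℝ) := Nat.cast_nonneg _
        linarith
      · exact h
    have hWltK : W.card < K.card := by omega
    have hWss : W ⊂ K := hWK.ssubset_of_ne (fun h => by rw [h] at hWltK; omega)
    have hKWss : K \ W ⊂ K := Finset.sdiff_ssubset hWK (Finset.card_pos.1 hW0)
    obtain ⟨P₁, S₁, hP₁K, hP₁e, hP₁c, hP₁u, hS₁K, hS₁card, hS₁x⟩ := ih W hWss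
    obtain ⟨P₂, S₂, hP₂K, hP₂e, hP₂c, hP₂u, hS₂K, hS₂card, hS₂x⟩ := ih (K \ W) hKWss
    set Sb : Finset V := (W.filter fun a => ∃ b ∈ K \ W, G.Adj a b) ∪
      ((K \ W).filter fun b => ∃ a ∈ W, G.Adj b a) with hSbdef
    have hSbcard : (Sb.card : ℝ) ≤ 2 * (bdryIn G K W : ℝ) := by
      have h1 := card_filter_exists_le_bdryTo G W (K \ W)
      have h2 := card_filter_exists_le_bdryTo G (K \ W) W
      have h3 : bdryTo G (K \ W) W = bdryTo G W (K \ W) := bdryTo_comm G _ _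
      have h4 : Sb.card ≤ (W.filter fun a => ∃ b ∈ K \ W, G.Adj a b).card +
          ((K \ W).filter fun b => ∃ a ∈ W, G.Adj b a).card := Finset.card_union_le _ _
      have : Sb.card ≤ 2 * bdryIn G K W := by
        unfold bdryIn; omega
      exact_mod_cast this
    refine ⟨P₁ ∪ P₂, S₁ ∪ S₂ ∪ Sb, ?_, ?_, ?_, ?_, ?_, ?_, ?_⟩
    · intro A hA
      rcases Finset.mem_union.1 hA with h | h
      · exact (hP₁K A h).trans hWK
      · exact (hP₂K A h).trans (Finset.sdiff_subset)
    · intro A hA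
      rcases Finset.mem_union.1 hA with h | h
      · exact hP₁e A h
      · exact hP₂e A h
    · intro a ha
      by_cases haW : a ∈ W
      · obtain ⟨A, hA, haA⟩ := hP₁c a haW
        exact ⟨A, Finset.mem_union_left _ hA, haA⟩
      · obtain ⟨A, hA, haA⟩ := hP₂c a (Finset.mem_sdiff.2 ⟨ha, haW⟩)
        exact ⟨A, Finset.mem_union_right _ hA, haA⟩
    · intro A hA B hB a haA haB
      rcases Finset.mem_union.1 hA with h1 | h1 <;> rcases Finset.mem_union.1 hB with h2 | h2
      · exact hP₁u A h1 B h2 a haA haB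
      · exact absurd (Finset.mem_sdiff.1 (hP₂K B h2 haB)).2 (fun h => h (hP₁K A h1 haA))
      · exact absurd (Finset.mem_sdiff.1 (hP₂K A h1 haA)).2 (fun h => h (hP₁K B h2 haB))
      · exact hP₂u A h1 B h2 a haA haB
    · intro a ha
      rcases Finset.mem_union.1 ha with h | h
      · rcases Finset.mem_union.1 h with h' | h'
        · exact hWK (hS₁K h')
        · exact Finset.sdiff_subset (hS₂K h')
      · rcases Finset.mem_union.1 h with h' | h'
        · exact hWK (Finset.mem_filter.1 h').1
        · exact Finset.sdiff_subset (Finset.mem_filter.1 h').1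
    · -- the cardinality bound
      have hcard : ((S₁ ∪ S₂ ∪ Sb).card : ℝ) ≤ (S₁.card : ℝ) + S₂.card + Sb.card := by
        have h5 : (S₁ ∪ S₂ ∪ Sb).card ≤ S₁.card + S₂.card + Sb.card := by
          calc (S₁ ∪ S₂ ∪ Sb).card ≤ (S₁ ∪ S₂).card + Sb.card := Finset.card_union_le _ _
            _ ≤ S₁.card + S₂.card + Sb.card := by
              have := Finset.card_union_le S₁ S₂; omega
        exact_mod_cast h5
      have hKWcast : (((K \ W).card : ℕ) : ℝ) = (K.card : ℝ) - W.card := by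
        rw [Finset.card_sdiff_of_subset hWK, Nat.cast_sub (Finset.card_le_card hWK)]
      have hWpos : (0:ℝ) < (W.card : ℝ) := by exact_mod_cast hW0
      have hKpos : (0:ℝ) < (K.card : ℝ) := by
        have : 0 < K.card := lt_of_le_of_lt (Nat.zero_le _) hWltK
        exact_mod_cast this
      set L : ℝ := Real.logb 2 K.card with hL
      have hlogW : Real.logb 2 W.card ≤ L - 1 := by
        have h1 : (W.card : ℝ) ≤ (K.card : ℝ) / 2 := by
          have : ((2 * W.card : ℕ) : ℝ) ≤ (K.card : ℝ) := by exact_mod_cast hW2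
          push_cast at this; linarith
        have h2 := Real.logb_le_logb_of_le one_lt_two hWpos h1
        rwa [Real.logb_div (ne_of_gt hKpos) two_ne_zero,
          Real.logb_self_eq_one one_lt_two] at h2
      have hKWpos : (0:ℝ) < ((K \ W).card : ℝ) := by
        rw [hKWcast]
        have : ((2 * W.card : ℕ) : ℝ) ≤ (K.card : ℝ) := by exact_mod_cast hW2
        push_cast at this; linarith
      have hlogKW : Real.logb 2 ((K \ W).card) ≤ L := by
        apply Real.logb_le_logb_of_le one_lt_two hKWpos
        rw [hKWcast]; linarith
      have hcoef1 : (0:ℝ) ≤ 2 * δ * W.card := by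
        have := hWpos.le; nlinarith
      have hcoef2 : (0:ℝ) ≤ 2 * δ * ((K \ W).card : ℝ) := by
        have := hKWpos.le; nlinarith
      have e1 : (S₁.card : ℝ) ≤ 2 * δ * W.card * (L - 1) :=
        le_trans hS₁card (mul_le_mul_of_nonneg_left hlogW hcoef1)
      have e2 : (S₂.card : ℝ) ≤ 2 * δ * ((K.card : ℝ) - W.card) * L := by
        calc (S₂.card : ℝ) ≤ 2 * δ * ((K \ W).card : ℝ) * Real.logb 2 ((K \ W).card) := hS₂card
          _ ≤ 2 * δ * ((K \ W).card : ℝ) * L := mul_le_mul_of_nonneg_left hlogKW hcoef2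
          _ = 2 * δ * ((K.card : ℝ) - W.card) * L := by rw [hKWcast]
      have e3 : (Sb.card : ℝ) ≤ 2 * (δ * W.card) := by
        have h0 : (0:ℝ) ≤ (bdryIn G K W : ℝ) := Nat.cast_nonneg _
        linarith
      calc ((S₁ ∪ S₂ ∪ Sb).card : ℝ) ≤ (S₁.card : ℝ) + S₂.card + Sb.card := hcard
        _ ≤ 2 * δ * W.card * (L - 1) + 2 * δ * ((K.card : ℝ) - W.card) * L
            + 2 * (δ * W.card) := by linarith
        _ = 2 * δ * K.card * L := by ring
    · intro a b ha hb hab hno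
      have hno₁ : ∀ A ∈ P₁, ¬(a ∈ A ∧ b ∈ A) := fun A hA => hno A (Finset.mem_union_left _ hA)
      have hno₂ : ∀ A ∈ P₂, ¬(a ∈ A ∧ b ∈ A) := fun A hA => hno A (Finset.mem_union_right _ hA)
      by_cases haW : a ∈ W <;> by_cases hbW : b ∈ W
      · obtain ⟨h1, h2⟩ := hS₁x a b haW hbW hab hno₁
        exact ⟨Finset.mem_union_left _ (Finset.mem_union_left _ h1),
               Finset.mem_union_left _ (Finset.mem_union_left _ h2)⟩
      · have hbKW : b ∈ K \ W := Finset.mem_sdiff.2 ⟨hb, hbW⟩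
        constructor
        · exact Finset.mem_union_right _ (Finset.mem_union_left _
            (Finset.mem_filter.2 ⟨haW, ⟨b, hbKW, hab⟩⟩))
        · exact Finset.mem_union_right _ (Finset.mem_union_right _
            (Finset.mem_filter.2 ⟨hbKW, ⟨a, haW, hab.symm⟩⟩))
      · have haKW : a ∈ K \ W := Finset.mem_sdiff.2 ⟨ha, haW⟩
        constructor
        · exact Finset.mem_union_right _ (Finset.mem_union_right _
            (Finset.mem_filter.2 ⟨haKW, ⟨b, hbW, hab⟩⟩))
        · exact Finset.mem_union_right _ (Finset.mem_union_left _
            (Finset.mem_filter.2 ⟨hbW, ⟨a, haKW, hab.symm⟩⟩))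
      · have haKW : a ∈ K \ W := Finset.mem_sdiff.2 ⟨ha, haW⟩
        have hbKW : b ∈ K \ W := Finset.mem_sdiff.2 ⟨hb, hbW⟩
        obtain ⟨h1, h2⟩ := hS₂x a b haKW hbKW hab hno₂
        exact ⟨Finset.mem_union_left _ (Finset.mem_union_right _ h1),
               Finset.mem_union_left _ (Finset.mem_union_right _ h2)⟩

lemma code_rank_le {r n : ℕ} (H : Matrix (Fin r) (Fin n) (ZMod 2)) (d : ℕ)
    (hd : ∀ x : Fin n → ZMod 2, H.mulVec x = 0 → x ≠ 0 → d ≤ hammingNorm x)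
    (P : Finset (Finset (Fin n))) (S : Finset (Fin n))
    (hcov : ∀ a : Fin n, ∃ A ∈ P, a ∈ A)
    (huniq : ∀ A ∈ P, ∀ B ∈ P, ∀ a, a ∈ A → a ∈ B → A = B)
    (hcross : ∀ a b, (connGraph H).Adj a b → (∀ A ∈ P, ¬(a ∈ A ∧ b ∈ A)) → a ∈ S ∧ b ∈ S) :
    Module.finrank (ZMod 2) (LinearMap.ker H.mulVecLin) ≤
      S.card + ∑ A ∈ P.filter (fun A => d ≤ 3 * A.card), A.card := by
  classical
  set S' : Finset (Fin n) := S ∪ (P.filter (fun A => d ≤ 3 * A.card)).biUnion id with hS'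
  have key : ∀ x : Fin n → ZMod 2, H.mulVec x = 0 → (∀ s ∈ S', x s = 0) → x = 0 := by
    intro x hx0 hvan
    funext u
    by_contra hxu
    obtain ⟨A, hA, huA⟩ := hcov u
    by_cases hbig : d ≤ 3 * A.card
    · refine hxu (hvan u ?_)
      exact Finset.mem_union_right _ (Finset.mem_biUnion.2
        ⟨A, Finset.mem_filter.2 ⟨hA, hbig⟩, huA⟩)
    · set y : Fin n → ZMod 2 := fun v => if v ∈ A then x v else 0 with hy
      have hy0 : H.mulVec y = 0 := by
        funext i
        show ∑ v, H i v * y v = 0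
        by_cases hTA : ∃ v, v ∈ A ∧ H i v ≠ 0 ∧ x v ≠ 0
        · obtain ⟨v₀, hv₀A, hv₀H, hv₀x⟩ := hTA
          have hterm : ∀ v, H i v * y v = H i v * x v := by
            intro v
            by_cases hvA : v ∈ A
            · simp [hy, hvA]
            · have hzero : H i v * x v = 0 := by
                by_contra hnz
                have hH : H i v ≠ 0 := fun h => hnz (by simp [h])
                have hxv : x v ≠ 0 := fun h => hnz (by simp [h])
                have hne : v ≠ v₀ := fun h => hvA (h ▸ hv₀A)
                have hadj : (connGraph H).Adj v v₀ := ⟨hne, i, hH, hv₀H⟩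
                by_cases hpiece : ∀ B ∈ P, ¬(v ∈ B ∧ v₀ ∈ B)
                · obtain ⟨hvS, hv₀S⟩ := hcross v v₀ hadj hpiece
                  exact hxv (hvan v (Finset.mem_union_left _ hvS))
                · push_neg at hpiece
                  obtain ⟨B, hB, hvB, hv₀B⟩ := hpiece
                  exact hvA ((huniq B hB A hA v₀ hv₀B hv₀A) ▸ hvB)
              simp [hy, hvA, hzero]
          rw [Finset.sum_congr rfl fun v _ => hterm v]
          have := congrFun hx0 i
          simpa [Matrix.mulVec, dotProduct] using this
        · push_neg at hTA
          apply Finset.sum_eq_zero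
          intro v _
          by_cases hvA : v ∈ A
          · by_cases hH : H i v = 0
            · simp [hH]
            · simp [hy, hvA, hTA v hvA hH]
          · simp [hy, hvA]
      have hyne : y ≠ 0 := by
        intro h
        apply hxu
        have := congrFun h u
        simpa [hy, huA] using this
      have hdy := hd y hy0 hyne
      have hnorm : hammingNorm y ≤ A.card := by
        refine le_trans (Finset.card_le_card ?_) le_rfl
        intro v hv
        simp only [hammingNorm, Finset.mem_filter, Finset.mem_univ, true_and] at hv
        by_contra hvA
        exact hv (by simp [hy, hvA])
      omega
  have hfield : Module.finrank (ZMod 2) (LinearMap.ker H.mulVecLin) ≤ S'.card := by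
    let L : ↥(LinearMap.ker H.mulVecLin) →ₗ[ZMod 2] (↥S' → ZMod 2) :=
      { toFun := fun x s => x.1 s.1
        map_add' := fun x y => rfl
        map_smul' := fun c x => rfl }
    have hinj : Function.Injective L := by
      rw [← LinearMap.ker_eq_bot, eq_bot_iff]
      rintro x hx
      rw [LinearMap.mem_ker] at hx
      rw [Submodule.mem_bot]
      apply Subtype.ext
      have hxker : H.mulVec x.1 = 0 := by
        have := x.2
        rwa [LinearMap.mem_ker, Matrix.mulVecLin_apply] at this
      exact key x.1 hxker (fun s hs => congrFun hx ⟨s, hs⟩)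
    calc Module.finrank (ZMod 2) (LinearMap.ker H.mulVecLin)
        ≤ Module.finrank (ZMod 2) (↥S' → ZMod 2) :=
          LinearMap.finrank_le_finrank_of_injective hinj
      _ = Fintype.card ↥S' := Module.finrank_fintype_fun_eq_card _
      _ = S'.card := Fintype.card_coe _
  refine le_trans hfield ?_
  calc S'.card ≤ S.card + ((P.filter (fun A => d ≤ 3 * A.card)).biUnion id).card :=
        Finset.card_union_le _ _
    _ ≤ S.card + ∑ A ∈ P.filter (fun A => d ≤ 3 * A.card), A.card := by
        have := Finset.card_biUnion_le (s := P.filter (fun A => d ≤ 3 * A.card))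
          (t := (id : Finset (Fin n) → Finset (Fin n)))
        simp only [id] at this
        omega

/-- For any classical `[n,k,d]` code with connectivity graph `G` (and `n` large enough), there
exist subsets `K_1, ..., K_t` of the vertices with `Σ|K_i| ≥ k/2`, `|K_i| ≥ d/3`, each inducing
an `Ω(k/(n·polylog(n)))`-expander. -/
theorem stmt10 : ∃ (c : ℝ) (p n₀ : ℕ), 0 < c ∧
    ∀ (n r k d : ℕ) (H : Matrix (Fin r) (Fin n) (ZMod 2)), n₀ ≤ n →
      Module.finrank (ZMod 2) (LinearMap.ker H.mulVecLin) = k →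
      (∀ x : Fin n → ZMod 2, H.mulVec x = 0 → x ≠ 0 → d ≤ hammingNorm x) →
      ∃ (t : ℕ) (K : Fin t → Finset (Fin n)),
        ((k : ℝ) / 2 ≤ ∑ i, ((K i).card : ℝ)) ∧
        (∀ i, (d : ℝ) / 3 ≤ (K i).card) ∧
        (∀ i, IsExpanderOn (connGraph H) (K i)
          (c * (k : ℝ) / ((n : ℝ) * Real.log n ^ p))) := by
  classical
  refine ⟨1/6, 1, 2, by norm_num, ?_⟩
  intro n r k d H hn hk hd
  set δ : ℝ := (1/6 : ℝ) * k / (n * Real.log n ^ 1) with hδdef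
  have hn1 : (1:ℝ) < n := by exact_mod_cast hn
  have hn0 : (0:ℝ) < n := by linarith
  have hlog : (0:ℝ) < Real.log n := Real.log_pos hn1
  have hδ0 : 0 ≤ δ := by
    apply div_nonneg
    · positivity
    · positivity
  obtain ⟨P, S, hPK, hPe, hPc, hPu, hSK, hScard, hSx⟩ :=
    decomp (connGraph H) δ hδ0 Finset.univ
  simp only [Finset.card_univ, Fintype.card_fin] at hScard
  set Big : Finset (Finset (Fin n)) := P.filter (fun A => d ≤ 3 * A.card) with hBig
  refine ⟨Big.card, fun i => ((Big.equivFin.symm i : ↥Big) : Finset (Fin n)), ?_, ?_, ?_⟩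
  · -- total size of big pieces
    have hsum : ∑ i : Fin Big.card,
        (((Big.equivFin.symm i : ↥Big) : Finset (Fin n)).card : ℝ)
        = ∑ A ∈ Big, (A.card : ℝ) := by
      calc ∑ i : Fin Big.card, (((Big.equivFin.symm i : ↥Big) : Finset (Fin n)).card : ℝ)
          = ∑ a : ↥Big, ((a : Finset (Fin n)).card : ℝ) :=
            Fintype.sum_equiv Big.equivFin.symm _ _ (fun i => rfl)
        _ = ∑ a ∈ Big.attach, ((a : Finset (Fin n)).card : ℝ) := by
            rw [Finset.univ_eq_attach]
        _ = ∑ A ∈ Big, (A.card : ℝ) := Finset.sum_attach Big (fun A => (A.card : ℝ))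
    rw [hsum]
    have hkb : k ≤ S.card + ∑ A ∈ Big, A.card := by
      rw [← hk]
      exact code_rank_le H d hd P S (fun a => hPc a (Finset.mem_univ a)) hPu
        (fun a b hab hno => hSx a b (Finset.mem_univ a) (Finset.mem_univ b) hab hno)
    have hkbR : (k:ℝ) ≤ (S.card : ℝ) + ∑ A ∈ Big, (A.card : ℝ) := by
      push_cast
      exact_mod_cast hkb
    have hsmall : (S.card : ℝ) ≤ (k:ℝ) / 2 := by
      have hlog2 : (0.6931471803:ℝ) < Real.log 2 := Real.log_two_gt_d9
      have heq : 2 * δ * n * Real.logb 2 n = (k:ℝ) / (3 * Real.log 2) := by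
        rw [hδdef, Real.logb, pow_one]
        field_simp
        ring
      have h2 : (k:ℝ) / (3 * Real.log 2) ≤ (k:ℝ) / 2 := by
        have hk0 : (0:ℝ) ≤ k := Nat.cast_nonneg k
        rw [div_le_div_iff₀ (by nlinarith) (by norm_num)]
        nlinarith
      calc (S.card : ℝ) ≤ 2 * δ * n * Real.logb 2 n := hScard
        _ = (k:ℝ) / (3 * Real.log 2) := heq
        _ ≤ (k:ℝ) / 2 := h2
    linarith
  · intro i
    have hmem : ((Big.equivFin.symm i : ↥Big) : Finset (Fin n)) ∈ Big :=
      (Big.equivFin.symm i).2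
    have hdle : d ≤ 3 * ((Big.equivFin.symm i : ↥Big) : Finset (Fin n)).card :=
      (Finset.mem_filter.1 hmem).2
    rw [div_le_iff₀ (by norm_num : (0:ℝ) < 3)]
    have hcast : (d:ℝ) ≤ 3 * ((Big.equivFin.symm i : ↥Big) : Finset (Fin n)).card := by
      exact_mod_cast hdle
    linarith
  · intro i
    have hmem : ((Big.equivFin.symm i : ↥Big) : Finset (Fin n)) ∈ Big :=
      (Big.equivFin.symm i).2
    exact hPe _ (Finset.mem_filter.1 hmem).1
end
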